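/- (Sequence kernel of Theorem 3) Let θ > 0, σ > 0, α ∈ (1/2, 1], and let {δ_k}_{k≥1} be a nonnegative real sequence satisfying δ_{k+1} ≤ δ_k − θδ_k² + (3/2)·σ/k^{2α} for all k ≥ 1. Then for all k ≥ 1: δ_k ≤ C/k^α, where C := 4√(3((3/2)θσ + 1)σ/θ) + (4/3)·max{δ₁, 4/θ}. -/

import Mathlib

set_option maxHeartbeats 2000000


/-- **Sequence kernel of Theorem 3.**
Let `θ > 0`, `σ > 0`, `α ∈ (1/2, 1]`, and `{δ_k}` nonnegative with
`δ_{k+1} ≤ δ_k − θδ_k² + (3/2)σ/k^{2α}` for all `k ≥ 1`. Then for all `k ≥ 1`: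
`δ_k ≤ C/k^α`, where `C := 4√(3((3/2)θσ + 1)σ/θ) + (4/3)max{δ₁, 4/θ}`. -/
theorem seq_kernel_dual_rate
    (θ σ α : ℝ) (hθ : 0 < θ) (hσ : 0 < σ) (hα : 1 / 2 < α ∧ α ≤ 1)
    (δ : ℕ → ℝ)
    (hδ : ∀ k, 1 ≤ k → 0 ≤ δ k)
    (hrec : ∀ k, 1 ≤ k →
        δ (k + 1) ≤ δ k - θ * δ k ^ 2 + 3 / 2 * (σ / (k : ℝ) ^ (2 * α)))
    (C : ℝ)
    (hC : C = 4 * Real.sqrt (3 * (3 / 2 * θ * σ + 1) * σ / θ)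
        + 4 / 3 * max (δ 1) (4 / θ)) :
    ∀ k, 1 ≤ k → δ k ≤ C / (k : ℝ) ^ α := by
  obtain ⟨hα1, hα2⟩ := hα
  have hα0 : 0 < α := by linarith
  have hδ1 : 0 ≤ δ 1 := hδ 1 le_rfl
  have hDθ : 4 / θ ≤ max (δ 1) (4 / θ) := le_max_right _ _
  have hs0 : 0 ≤ Real.sqrt (3 * (3 / 2 * θ * σ + 1) * σ / θ) := Real.sqrt_nonneg _
  have hCge : 16 / (3 * θ) ≤ C := by
    have h1 : 16 / (3 * θ) = 4 / 3 * (4 / θ) := by ring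
    rw [hC, h1]
    nlinarith [hDθ]
  have hC0 : 0 < C := lt_of_lt_of_le (by positivity) hCge
  have hθC : 16 ≤ 3 * (θ * C) := by
    have h := (div_le_iff₀ (by positivity : (0:ℝ) < 3 * θ)).mp hCge
    linarith
  have hCsq : 72 * σ ^ 2 + 48 * (σ / θ) ≤ C ^ 2 := by
    have hX0 : 0 ≤ 3 * (3 / 2 * θ * σ + 1) * σ / θ := by positivity
    have h4θ : 0 < 4 / θ := by positivity
    have h4s : 4 * Real.sqrt (3 * (3 / 2 * θ * σ + 1) * σ / θ) ≤ C := by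
      rw [hC]; nlinarith [hDθ]
    have hsq := Real.sq_sqrt hX0
    have h16 : 16 * (3 * (3 / 2 * θ * σ + 1) * σ / θ) ≤ C ^ 2 := by
      nlinarith [hs0]
    have heq : 16 * (3 * (3 / 2 * θ * σ + 1) * σ / θ) = 72 * σ ^ 2 + 48 * (σ / θ) := by
      field_simp; ring
    linarith
  have hσ6 : 6 * σ ≤ C := by
    have h48 : 0 < 48 * (σ / θ) := by positivity
    nlinarith [hCsq, hC0, hσ]
  have h48 : 48 * σ ≤ θ * C ^ 2 := by
    have h : 48 * σ / θ ≤ C ^ 2 := by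
      have : 48 * (σ / θ) = 48 * σ / θ := by ring
      nlinarith [hCsq, sq_nonneg σ, this]
    have := (div_le_iff₀ hθ).mp h
    linarith
  have h163 : 16 * C ≤ 3 * (θ * C ^ 2) := by nlinarith [hθC, hC0.le]
  have hIA : C + 3 / 2 * σ ≤ θ * C ^ 2 := by linarith
  have hIB : 4 * C + 6 * σ ≤ θ * C ^ 2 := by linarith
  have fbound : ∀ y : ℝ, y - θ * y ^ 2 ≤ 1 / (4 * θ) := by
    intro y
    rw [le_div_iff₀ (by positivity : (0:ℝ) < 4 * θ)]
    nlinarith [sq_nonneg (2 * θ * y - 1)]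
  intro k hk
  induction k, hk using Nat.le_induction with
  | base =>
    simp only [Nat.cast_one, Real.one_rpow, div_one]
    rw [hC]
    linarith [le_max_left (δ 1) (4 / θ), hs0, hδ1]
  | succ k hk IH =>
    have hx1 : (1:ℝ) ≤ (k:ℝ) := by exact_mod_cast hk
    have hx0 : (0:ℝ) < (k:ℝ) := by linarith
    rw [show ((k + 1 : ℕ) : ℝ) = (k : ℝ) + 1 by push_cast; ring]
    set p : ℝ := (k:ℝ) ^ α with hpdef
    set r : ℝ := ((k:ℝ) + 1) ^ α with hrdef
    have hp0 : 0 < p := Real.rpow_pos_of_pos hx0 α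
    have hr0 : 0 < r := Real.rpow_pos_of_pos (by linarith) α
    have hp1 : 1 ≤ p := by
      calc (1:ℝ) = 1 ^ α := (Real.one_rpow α).symm
        _ ≤ (k:ℝ) ^ α := Real.rpow_le_rpow zero_le_one hx1 hα0.le
    have hpr : p ≤ r := Real.rpow_le_rpow hx0.le (by linarith) hα0.le
    have hrp1 : r ≤ p + 1 := by
      have h := NNReal.rpow_add_le_add_rpow (Real.toNNReal (k:ℝ)) 1 hα0.le hα2
      have h' := NNReal.coe_le_coe.2 h
      have hx' : ((Real.toNNReal (k:ℝ) : ℝ)) = (k:ℝ) := Real.coe_toNNReal _ hx0.le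
      simp only [NNReal.coe_rpow, NNReal.coe_add, NNReal.coe_one, hx',
        NNReal.one_rpow] at h'
      exact h'
    have hr2 : r ≤ 2 * p := by
      calc r ≤ (2 * (k:ℝ)) ^ α :=
            Real.rpow_le_rpow (by linarith) (by linarith) hα0.le
        _ = 2 ^ α * p := Real.mul_rpow (by norm_num) hx0.le
        _ ≤ 2 * p := by
            have h2 : (2:ℝ) ^ α ≤ 2 ^ (1:ℝ) :=
              Real.rpow_le_rpow_of_exponent_le (by norm_num) hα2
            rw [Real.rpow_one] at h2
            nlinarith [hp0]
    have hq : (k:ℝ) ^ (2 * α) = p ^ 2 := by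
      rw [show (2 : ℝ) * α = α * 2 by ring, Real.rpow_mul hx0.le, Real.rpow_two, hpdef, sq]
    have hrec' := hrec k hk
    rw [hq] at hrec'
    have hIH : δ k ≤ C / p := IH
    have hδk := hδ k hk
    have key1 : C / p - C / p ^ 2 ≤ C / r := by
      rw [show C / p - C / p ^ 2 = C * (p - 1) / p ^ 2 by field_simp,
        div_le_div_iff₀ (by positivity) hr0]
      nlinarith [mul_le_mul_of_nonneg_left hrp1
        (mul_nonneg hC0.le (by linarith : (0:ℝ) ≤ p - 1))]
    rcases le_or_gt (C / p) (1 / (2 * θ)) with hA | hBC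
    · -- Case A : C/p ≤ 1/(2θ)
      have hhalf : θ * (1 / (2 * θ)) = 1 / 2 := by field_simp
      have h2 : θ * (C / p) ≤ 1 / 2 := by
        have := mul_le_mul_of_nonneg_left hA hθ.le
        linarith
      have h3 : θ * δ k ≤ 1 / 2 := by
        have := mul_le_mul_of_nonneg_left (hIH.trans hA) hθ.le
        linarith
      have hmono : δ k - θ * δ k ^ 2 ≤ C / p - θ * (C / p) ^ 2 := by
        nlinarith [mul_nonneg (sub_nonneg.mpr hIH)
          (by linarith : (0:ℝ) ≤ 1 - θ * (C / p) - θ * δ k)]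
      have h5 : (3 / 2 * σ + C - θ * C ^ 2) / p ^ 2 ≤ 0 := by
        apply div_nonpos_of_nonpos_of_nonneg (by linarith) (by positivity)
      have heq : C / p - θ * (C / p) ^ 2 + 3 / 2 * (σ / p ^ 2)
          = (C / p - C / p ^ 2) + (3 / 2 * σ + C - θ * C ^ 2) / p ^ 2 := by
        field_simp; ring
      linarith [hrec', hmono, key1]
    · -- Case B/C : C/p > 1/(2θ)
      have hf : δ k - θ * δ k ^ 2 ≤ 1 / (4 * θ) := fbound (δ k)
      rcases le_or_gt (1 / θ) (C / p) with hCc | hBc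
      · -- Case C : C/p ≥ 1/θ
        have hpθC : p ≤ θ * C := by
          have := (div_le_div_iff₀ hθ hp0).mp hCc
          linarith
        have hstep : 1 / (4 * θ) + 3 / 2 * (σ / p ^ 2) ≤ C / (2 * p) := by
          rw [show 1 / (4 * θ) + 3 / 2 * (σ / p ^ 2) = (p ^ 2 + 6 * θ * σ) / (4 * θ * p ^ 2) by
              field_simp; ring,
            div_le_div_iff₀ (by positivity) (by positivity)]
          have h1 : p * (2 * p ^ 2) ≤ θ * C * (2 * p ^ 2) :=
            mul_le_mul_of_nonneg_right hpθC (by positivity)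
          have h2 : 6 * σ * (2 * θ * p) ≤ C * (2 * θ * p) :=
            mul_le_mul_of_nonneg_right hσ6
              (by nlinarith [mul_pos hθ hp0] : (0:ℝ) ≤ 2 * θ * p)
          have h3 : 1 * (2 * θ * C * p) ≤ p * (2 * θ * C * p) :=
            mul_le_mul_of_nonneg_right hp1
              (by nlinarith [mul_pos (mul_pos hθ hC0) hp0] : (0:ℝ) ≤ 2 * θ * C * p)
          linarith [h1, h2, h3]
        have h2r : C / (2 * p) ≤ C / r := by
          apply div_le_div_of_nonneg_left hC0.le hr0 hr2
        linarith [hrec', hf, hstep]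
      · -- Case B : 1/(2θ) < C/p < 1/θ
        have hθCp : θ * C < p := by
          have := (div_lt_div_iff₀ hp0 hθ).mp hBc
          linarith
        have hp2θC : p < 2 * θ * C := by
          have := (div_lt_div_iff₀ (by positivity : (0:ℝ) < 2 * θ) hp0).mp hBC
          linarith
        have hstep : 1 / (4 * θ) + 3 / 2 * (σ / p ^ 2) + C / p ^ 2 ≤ C / p := by
          rw [show 1 / (4 * θ) + 3 / 2 * (σ / p ^ 2) + C / p ^ 2
              = (p ^ 2 + 6 * θ * σ + 4 * θ * C) / (4 * θ * p ^ 2) by field_simp; ring,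
            div_le_div_iff₀ (by positivity) hp0]
          have hA2 : θ * C * C ≤ C * p :=
            by nlinarith [mul_le_mul_of_nonneg_left hθCp.le hC0.le]
          have hprod : 0 ≤ 2 * θ * p * (C * p - 3 * σ - 2 * C) := by
            apply mul_nonneg (by nlinarith [mul_pos hθ hp0] : (0:ℝ) ≤ 2 * θ * p)
            nlinarith [hA2, hIB, hC0.le, hσ.le]
          nlinarith [mul_le_mul_of_nonneg_right hp2θC.le (mul_pos hp0 hp0).le, hprod,
            hθ.le, hp0.le]
        linarith [hrec', hf, hstep, key1]
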